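/- Every ABAB-free hypergraph is proper 3-colorable: its vertices can be colored with 3 colors so that no hyperedge of size at least 2 is monochromatic. -/
import Mathlib


/-- An `ABAB`-sequence for two hyperedges `A`, `B` with respect to a strict order `lt`. -/
def ABABseq {V : Type*} (lt : V → V → Prop) (A B : Set V) : Prop :=
  ∃ a1 b1 a2 b2 : V, lt a1 b1 ∧ lt b1 a2 ∧ lt a2 b2 ∧
    a1 ∈ A \ B ∧ a2 ∈ A \ B ∧ b1 ∈ B \ A ∧ b2 ∈ B \ A

/-- A hypergraph (edge set `E`) is ABAB-free with respect to the order `lt`. -/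
def ABABFree {V : Type*} (lt : V → V → Prop) (E : Set (Set V)) : Prop :=
  ∀ A ∈ E, ∀ B ∈ E, ¬ ABABseq lt A B

section Helpers

variable {V : Type*} [LinearOrder V]

/-- Pigeonhole: among three distinct elements all different from `v`, two lie on the
same side of `v`; we return them suitably ordered. -/
lemma pick_pair {v a b c : V} (hab : a ≠ b) (hac : a ≠ c) (hbc : b ≠ c)
    (ha : v ≠ a) (hb : v ≠ b) (hc : v ≠ c) :
    ∃ p q : V, (p = a ∨ p = b ∨ p = c) ∧ (q = a ∨ q = b ∨ q = c) ∧
      ((v < p ∧ p < q) ∨ (q < p ∧ p < v)) := by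
  have mkA : ∀ p q : V, (p = a ∨ p = b ∨ p = c) → (q = a ∨ q = b ∨ q = c) → p ≠ q →
      v < p → v < q →
      ∃ p' q' : V, (p' = a ∨ p' = b ∨ p' = c) ∧ (q' = a ∨ q' = b ∨ q' = c) ∧
        ((v < p' ∧ p' < q') ∨ (q' < p' ∧ p' < v)) := by
    intro p q hp hq hne h1 h2
    rcases lt_or_gt_of_ne hne with h | h
    · exact ⟨p, q, hp, hq, Or.inl ⟨h1, h⟩⟩
    · exact ⟨q, p, hq, hp, Or.inl ⟨h2, h⟩⟩
  have mkB : ∀ p q : V, (p = a ∨ p = b ∨ p = c) → (q = a ∨ q = b ∨ q = c) → p ≠ q →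
      p < v → q < v →
      ∃ p' q' : V, (p' = a ∨ p' = b ∨ p' = c) ∧ (q' = a ∨ q' = b ∨ q' = c) ∧
        ((v < p' ∧ p' < q') ∨ (q' < p' ∧ p' < v)) := by
    intro p q hp hq hne h1 h2
    rcases lt_or_gt_of_ne hne with h | h
    · exact ⟨q, p, hq, hp, Or.inr ⟨h, h2⟩⟩
    · exact ⟨p, q, hp, hq, Or.inr ⟨h, h1⟩⟩
  rcases lt_or_gt_of_ne ha with h1 | h1 <;>
    rcases lt_or_gt_of_ne hb with h2 | h2 <;>
      rcases lt_or_gt_of_ne hc with h3 | h3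
  · exact mkA a b (Or.inl rfl) (Or.inr (Or.inl rfl)) hab h1 h2
  · exact mkA a b (Or.inl rfl) (Or.inr (Or.inl rfl)) hab h1 h2
  · exact mkA a c (Or.inl rfl) (Or.inr (Or.inr rfl)) hac h1 h3
  · exact mkB b c (Or.inr (Or.inl rfl)) (Or.inr (Or.inr rfl)) hbc h2 h3
  · exact mkA b c (Or.inr (Or.inl rfl)) (Or.inr (Or.inr rfl)) hbc h2 h3
  · exact mkB a c (Or.inl rfl) (Or.inr (Or.inr rfl)) hac h1 h3
  · exact mkB a b (Or.inl rfl) (Or.inr (Or.inl rfl)) hab h1 h2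
  · exact mkB a b (Or.inl rfl) (Or.inr (Or.inl rfl)) hab h1 h2

/-- In a non-crossing graph on an ordered vertex set with at least 3 vertices,
there is a vertex strictly between the minimum and the maximum having at most
two neighbours. -/
lemma deg3' (G : V → V → Prop)
    (Gsymm : ∀ x y, G x y → G y x) (Girr : ∀ x y, G x y → x ≠ y) :
    ∀ n (W : Finset V) (hW : W.Nonempty), W.card ≤ n → 3 ≤ W.card →
    (∀ a b c d, a ∈ W → b ∈ W → c ∈ W → d ∈ W →
      a < b → b < c → c < d → G a c → G b d → False) →
    ∃ v ∈ W, (W.min' hW < v ∧ v < W.max' hW) ∧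
      ∃ u w : V, ∀ x ∈ W, G v x → x = u ∨ x = w := by
  intro n
  induction n with
  | zero => intro W hW hn h3 _; omega
  | succ k ih =>
    intro W hW hn h3 hnc
    set m := W.min' hW with hm_def
    set M := W.max' hW with hM_def
    -- find a vertex strictly between min and max
    have hne2 : ((W.erase m).erase M).Nonempty := by
      rw [← Finset.card_pos]
      have e1 : (W.erase m).card = W.card - 1 :=
        Finset.card_erase_of_mem (W.min'_mem hW)
      have e2 : ((W.erase m).erase M).card ≥ (W.erase m).card - 1 :=
        Finset.pred_card_le_card_erase
      omega
    obtain ⟨v0, hv0⟩ := hne2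
    rw [Finset.mem_erase, Finset.mem_erase] at hv0
    obtain ⟨hv0M, hv0m, hv0W⟩ := hv0
    have hmv0 : m < v0 := lt_of_le_of_ne (W.min'_le v0 hv0W) (Ne.symm hv0m)
    have hv0M' : v0 < M := lt_of_le_of_ne (W.le_max' v0 hv0W) hv0M
    by_cases hdeg : ∃ u w : V, ∀ x ∈ W, G v0 x → x = u ∨ x = w
    · exact ⟨v0, hv0W, ⟨hmv0, hv0M'⟩, hdeg⟩
    push_neg at hdeg
    obtain ⟨x1, hx1W, hx1G, -, -⟩ := hdeg v0 v0
    obtain ⟨x2, hx2W, hx2G, hx21, -⟩ := hdeg x1 x1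
    obtain ⟨x3, hx3W, hx3G, hx31, hx32⟩ := hdeg x1 x2
    obtain ⟨p, q, hp, hq, hside⟩ :=
      pick_pair (v := v0) (Ne.symm hx21) (Ne.symm hx31) (Ne.symm hx32)
        (Girr _ _ hx1G) (Girr _ _ hx2G) (Girr _ _ hx3G)
    have hpW : p ∈ W := by rcases hp with rfl | rfl | rfl <;> assumption
    have hqW : q ∈ W := by rcases hq with rfl | rfl | rfl <;> assumption
    have hpG : G v0 p := by rcases hp with rfl | rfl | rfl <;> assumption
    have hqG : G v0 q := by rcases hq with rfl | rfl | rfl <;> assumption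
    rcases hside with ⟨h1, h2⟩ | ⟨h1, h2⟩
    · -- two neighbours above v0 : v0 < p < q ; recurse on [v0, q]
      set W' := W.filter (fun x => v0 ≤ x ∧ x ≤ q) with hW'def
      have hv0' : v0 ∈ W' := by
        simp only [hW'def, Finset.mem_filter]
        exact ⟨hv0W, le_refl _, le_of_lt (h1.trans h2)⟩
      have hp' : p ∈ W' := by
        simp only [hW'def, Finset.mem_filter]
        exact ⟨hpW, le_of_lt h1, le_of_lt h2⟩
      have hq' : q ∈ W' := by
        simp only [hW'def, Finset.mem_filter]
        exact ⟨hqW, le_of_lt (h1.trans h2), le_refl _⟩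
      have hW'ne : W'.Nonempty := ⟨v0, hv0'⟩
      have hmin : W'.min' hW'ne = v0 :=
        le_antisymm (W'.min'_le v0 hv0')
          (Finset.le_min' _ _ _ fun x hx => (Finset.mem_filter.mp hx).2.1)
      have hmax : W'.max' hW'ne = q :=
        le_antisymm (Finset.max'_le _ _ _ fun x hx => (Finset.mem_filter.mp hx).2.2)
          (W'.le_max' q hq')
      have hsub3 : ({v0, p, q} : Finset V) ⊆ W' := by
        intro z hz
        simp only [Finset.mem_insert, Finset.mem_singleton] at hz
        rcases hz with rfl | rfl | rfl <;> assumption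
      have hcard3 : ({v0, p, q} : Finset V).card = 3 :=
        Finset.card_eq_three.mpr ⟨v0, p, q, ne_of_lt h1, ne_of_lt (h1.trans h2),
          ne_of_lt h2, rfl⟩
      have h3' : 3 ≤ W'.card := hcard3 ▸ Finset.card_le_card hsub3
      have hlt : W'.card < W.card := by
        apply Finset.card_lt_card
        rw [Finset.ssubset_iff_of_subset (Finset.filter_subset _ _)]
        exact ⟨m, W.min'_mem hW, by
          simp only [hW'def, Finset.mem_filter]
          exact fun hmem => absurd hmem.2.1 (not_le.mpr hmv0)⟩
      have hnc' : ∀ a b c d, a ∈ W' → b ∈ W' → c ∈ W' → d ∈ W' →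
          a < b → b < c → c < d → G a c → G b d → False := fun a b c d ha hb hc hd =>
        hnc a b c d (Finset.filter_subset _ _ ha) (Finset.filter_subset _ _ hb)
          (Finset.filter_subset _ _ hc) (Finset.filter_subset _ _ hd)
      obtain ⟨v, hvW', ⟨hv1, hv2⟩, u, w, hu⟩ := ih W' hW'ne (by omega) h3' hnc'
      rw [hmin] at hv1
      rw [hmax] at hv2
      have hvW : v ∈ W := Finset.filter_subset _ _ hvW'
      refine ⟨v, hvW, ⟨hmv0.trans hv1, lt_of_lt_of_le hv2 (W.le_max' q hqW)⟩,
        u, w, ?_⟩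
      intro x hxW hGvx
      have hxW' : x ∈ W' := by
        simp only [hW'def, Finset.mem_filter]
        refine ⟨hxW, ?_, ?_⟩
        · by_contra hlt'
          push_neg at hlt'
          exact hnc x v0 v q hxW hv0W hvW hqW hlt' hv1 hv2 (Gsymm _ _ hGvx) hqG
        · by_contra hgt'
          push_neg at hgt'
          exact hnc v0 v q x hv0W hvW hqW hxW hv1 hv2 hgt' hqG hGvx
      exact hu x hxW' hGvx
    · -- two neighbours below v0 : q < p < v0 ; recurse on [q, v0]
      set W' := W.filter (fun x => q ≤ x ∧ x ≤ v0) with hW'def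
      have hv0' : v0 ∈ W' := by
        simp only [hW'def, Finset.mem_filter]
        exact ⟨hv0W, le_of_lt (h1.trans h2), le_refl _⟩
      have hp' : p ∈ W' := by
        simp only [hW'def, Finset.mem_filter]
        exact ⟨hpW, le_of_lt h1, le_of_lt h2⟩
      have hq' : q ∈ W' := by
        simp only [hW'def, Finset.mem_filter]
        exact ⟨hqW, le_refl _, le_of_lt (h1.trans h2)⟩
      have hW'ne : W'.Nonempty := ⟨v0, hv0'⟩
      have hmin : W'.min' hW'ne = q :=
        le_antisymm (W'.min'_le q hq')
          (Finset.le_min' _ _ _ fun x hx => (Finset.mem_filter.mp hx).2.1)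
      have hmax : W'.max' hW'ne = v0 :=
        le_antisymm (Finset.max'_le _ _ _ fun x hx => (Finset.mem_filter.mp hx).2.2)
          (W'.le_max' v0 hv0')
      have hsub3 : ({q, p, v0} : Finset V) ⊆ W' := by
        intro z hz
        simp only [Finset.mem_insert, Finset.mem_singleton] at hz
        rcases hz with rfl | rfl | rfl <;> assumption
      have hcard3 : ({q, p, v0} : Finset V).card = 3 :=
        Finset.card_eq_three.mpr ⟨q, p, v0, ne_of_lt h1, ne_of_lt (h1.trans h2),
          ne_of_lt h2, rfl⟩
      have h3' : 3 ≤ W'.card := hcard3 ▸ Finset.card_le_card hsub3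
      have hlt : W'.card < W.card := by
        apply Finset.card_lt_card
        rw [Finset.ssubset_iff_of_subset (Finset.filter_subset _ _)]
        exact ⟨M, W.max'_mem hW, by
          simp only [hW'def, Finset.mem_filter]
          exact fun hmem => absurd hmem.2.2 (not_le.mpr hv0M')⟩
      have hnc' : ∀ a b c d, a ∈ W' → b ∈ W' → c ∈ W' → d ∈ W' →
          a < b → b < c → c < d → G a c → G b d → False := fun a b c d ha hb hc hd =>
        hnc a b c d (Finset.filter_subset _ _ ha) (Finset.filter_subset _ _ hb)
          (Finset.filter_subset _ _ hc) (Finset.filter_subset _ _ hd)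
      obtain ⟨v, hvW', ⟨hv1, hv2⟩, u, w, hu⟩ := ih W' hW'ne (by omega) h3' hnc'
      rw [hmin] at hv1
      rw [hmax] at hv2
      have hvW : v ∈ W := Finset.filter_subset _ _ hvW'
      refine ⟨v, hvW, ⟨lt_of_le_of_lt (W.min'_le q hqW) hv1, hv2.trans hv0M'⟩,
        u, w, ?_⟩
      intro x hxW hGvx
      have hxW' : x ∈ W' := by
        simp only [hW'def, Finset.mem_filter]
        refine ⟨hxW, ?_, ?_⟩
        · by_contra hlt'
          push_neg at hlt'
          exact hnc x q v v0 hxW hqW hvW hv0W hlt' hv1 hv2 (Gsymm _ _ hGvx)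
            (Gsymm _ _ hqG)
        · by_contra hgt'
          push_neg at hgt'
          exact hnc q v v0 x hqW hvW hv0W hxW hv1 hv2 hgt' (Gsymm _ _ hqG) hGvx
      exact hu x hxW' hGvx

/-- Any nonempty non-crossing graph on an ordered vertex set has a vertex with at
most two neighbours. -/
lemma deg3 (G : V → V → Prop)
    (Gsymm : ∀ x y, G x y → G y x) (Girr : ∀ x y, G x y → x ≠ y)
    (W : Finset V) (hW : W.Nonempty)
    (hnc : ∀ a b c d, a ∈ W → b ∈ W → c ∈ W → d ∈ W →
      a < b → b < c → c < d → G a c → G b d → False) :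
    ∃ v ∈ W, ∃ u w : V, ∀ x ∈ W, G v x → x = u ∨ x = w := by
  by_cases h3 : 3 ≤ W.card
  · obtain ⟨v, hv, -, u, w, hu⟩ := deg3' G Gsymm Girr W.card W hW le_rfl h3 hnc
    exact ⟨v, hv, u, w, hu⟩
  · push_neg at h3
    obtain ⟨v, hv⟩ := hW
    have herase : (W.erase v).card ≤ 1 := by
      have := Finset.card_erase_of_mem hv
      omega
    rcases (W.erase v).eq_empty_or_nonempty with he | ⟨z, hz⟩
    · refine ⟨v, hv, v, v, fun x hx hGx => ?_⟩
      exfalso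
      have : x ∈ W.erase v := Finset.mem_erase.mpr ⟨Ne.symm (Girr _ _ hGx), hx⟩
      rw [he] at this
      exact absurd this (Finset.notMem_empty x)
    · refine ⟨v, hv, z, z, fun x hx hGx => ?_⟩
      left
      have hx' : x ∈ W.erase v := Finset.mem_erase.mpr ⟨Ne.symm (Girr _ _ hGx), hx⟩
      exact Finset.card_le_one.mp herase x hx' z hz

/-- Fin 3 always has a colour distinct from any two given ones. -/
lemma fin3_avoid : ∀ a b : Fin 3, ∃ γ : Fin 3, γ ≠ a ∧ γ ≠ b := by decide

/-- Main induction: colouring of the trace of an ABAB-free hypergraph on a finite set. -/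
lemma color' {V : Type*} [LinearOrder V] (E : Set (Set V))
    (hE : ABABFree (· < ·) E) :
    ∀ n (W : Finset V), W.card ≤ n →
    ∃ c : V → Fin 3, ∀ A ∈ E, 2 ≤ (A ∩ ↑W).ncard →
      ∃ x ∈ A ∩ (↑W : Set V), ∃ y ∈ A ∩ (↑W : Set V), c x ≠ c y := by
  intro n
  induction n with
  | zero =>
    intro W hn
    have hW : W = ∅ := Finset.card_eq_zero.mp (Nat.le_zero.mp hn)
    refine ⟨fun _ => 0, fun A _ h2 => ?_⟩
    exfalso
    rw [hW] at h2
    simp at h2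
  | succ k ih =>
    intro W hn
    rcases W.eq_empty_or_nonempty with rfl | hWne
    · refine ⟨fun _ => 0, fun A _ h2 => ?_⟩
      exfalso
      simp at h2
    classical
    -- the "pair trace" graph
    set G : V → V → Prop :=
      fun x y => x ≠ y ∧ ∃ A ∈ E, A ∩ (↑W : Set V) = ({x, y} : Set V) with hGdef
    have Gsymm : ∀ x y, G x y → G y x := by
      rintro x y ⟨hne, A, hA, hAW⟩
      exact ⟨hne.symm, A, hA, by rw [hAW, Set.pair_comm]⟩
    have Girr : ∀ x y, G x y → x ≠ y := fun x y h => h.1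
    have hnc : ∀ a b c d, a ∈ W → b ∈ W → c ∈ W → d ∈ W →
        a < b → b < c → c < d → G a c → G b d → False := by
      rintro a b c d haW hbW hcW hdW hab hbc hcd ⟨-, A, hA, hAW⟩ ⟨-, B, hB, hBW⟩
      apply hE A hA B hB
      have haA : a ∈ A := by
        have : a ∈ A ∩ (↑W : Set V) := hAW ▸ Set.mem_insert a {c}
        exact this.1
      have hcA : c ∈ A := by
        have : c ∈ A ∩ (↑W : Set V) := hAW ▸ Set.mem_insert_of_mem a rfl
        exact this.1
      have hbB : b ∈ B := by
        have : b ∈ B ∩ (↑W : Set V) := hBW ▸ Set.mem_insert b {d}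
        exact this.1
      have hdB : d ∈ B := by
        have : d ∈ B ∩ (↑W : Set V) := hBW ▸ Set.mem_insert_of_mem b rfl
        exact this.1
      have haB : a ∉ B := by
        intro haB
        have : a ∈ B ∩ (↑W : Set V) := ⟨haB, haW⟩
        rw [hBW] at this
        rcases this with rfl | h
        · exact absurd hab (lt_irrefl _)
        · rw [Set.mem_singleton_iff] at h
          subst h
          exact absurd (hab.trans (hbc.trans hcd)) (lt_irrefl _)
      have hcB : c ∉ B := by
        intro hcB
        have : c ∈ B ∩ (↑W : Set V) := ⟨hcB, hcW⟩
        rw [hBW] at this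
        rcases this with rfl | h
        · exact absurd hbc (lt_irrefl _)
        · rw [Set.mem_singleton_iff] at h
          subst h
          exact absurd hcd (lt_irrefl _)
      have hbA : b ∉ A := by
        intro hbA
        have : b ∈ A ∩ (↑W : Set V) := ⟨hbA, hbW⟩
        rw [hAW] at this
        rcases this with rfl | h
        · exact absurd hab (lt_irrefl _)
        · rw [Set.mem_singleton_iff] at h
          subst h
          exact absurd hbc (lt_irrefl _)
      have hdA : d ∉ A := by
        intro hdA
        have : d ∈ A ∩ (↑W : Set V) := ⟨hdA, hdW⟩
        rw [hAW] at this
        rcases this with rfl | h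
        · exact absurd (hab.trans (hbc.trans hcd)) (lt_irrefl _)
        · rw [Set.mem_singleton_iff] at h
          subst h
          exact absurd hcd (lt_irrefl _)
      exact ⟨a, b, c, d, hab, hbc, hcd, ⟨haA, haB⟩, ⟨hcA, hcB⟩, ⟨hbB, hbA⟩, ⟨hdB, hdA⟩⟩
    obtain ⟨v, hvW, u, w, hu⟩ := deg3 G Gsymm Girr W hWne hnc
    have hcard : (W.erase v).card ≤ k := by
      have := Finset.card_erase_of_mem hvW
      have := Finset.card_pos.mpr hWne
      omega
    obtain ⟨c', hc'⟩ := ih (W.erase v) hcard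
    obtain ⟨γ, hγu, hγw⟩ := fin3_avoid (c' u) (c' w)
    refine ⟨Function.update c' v γ, ?_⟩
    intro A hA h2
    have hW'coe : (↑(W.erase v) : Set V) = (↑W : Set V) \ {v} := by
      simp [Finset.coe_erase]
    by_cases hvA : v ∈ A
    · by_cases h2' : 2 ≤ (A ∩ ↑(W.erase v)).ncard
      · obtain ⟨x, hx, y, hy, hxy⟩ := hc' A hA h2'
        rw [hW'coe] at hx hy
        have hxv : x ≠ v := hx.2.2
        have hyv : y ≠ v := hy.2.2
        refine ⟨x, ⟨hx.1, hx.2.1⟩, y, ⟨hy.1, hy.2.1⟩, ?_⟩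
        rwa [Function.update_of_ne hxv, Function.update_of_ne hyv]
      · -- the trace has exactly the form {v, x}
        set T := A ∩ (↑(W.erase v) : Set V) with hTdef
        have hins : A ∩ (↑W : Set V) = insert v T := by
          rw [hTdef, hW'coe]
          ext z
          simp only [Set.mem_inter_iff, Set.mem_insert_iff, Set.mem_diff,
            Set.mem_singleton_iff]
          constructor
          · rintro ⟨hzA, hzW⟩
            by_cases hz : z = v
            · exact Or.inl hz
            · exact Or.inr ⟨hzA, hzW, hz⟩
          · rintro (rfl | ⟨hzA, hzW, -⟩)
            · exact ⟨hvA, hvW⟩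
            · exact ⟨hzA, hzW⟩
        have hT1 : T.ncard = 1 := by
          have hle := Set.ncard_insert_le v T
          rw [← hins] at hle
          push_neg at h2'
          omega
        obtain ⟨x, hTx⟩ := Set.ncard_eq_one.mp hT1
        have hxmem : x ∈ T := by rw [hTx]; exact rfl
        rw [hTdef, hW'coe] at hxmem
        have hxv : x ≠ v := hxmem.2.2
        have hGvx : G v x := by
          refine ⟨Ne.symm hxv, A, hA, ?_⟩
          rw [hins, hTx]
        have hxuw : x = u ∨ x = w := hu x hxmem.2.1 hGvx
        refine ⟨v, ⟨hvA, hvW⟩, x, ⟨hxmem.1, hxmem.2.1⟩, ?_⟩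
        rw [Function.update_self, Function.update_of_ne hxv]
        rcases hxuw with rfl | rfl
        · exact hγu
        · exact hγw
    · -- v ∉ A : the trace is unchanged
      have heq : A ∩ (↑(W.erase v) : Set V) = A ∩ (↑W : Set V) := by
        rw [hW'coe]
        ext z
        simp only [Set.mem_inter_iff, Set.mem_diff, Set.mem_singleton_iff]
        constructor
        · rintro ⟨hzA, hzW, -⟩; exact ⟨hzA, hzW⟩
        · rintro ⟨hzA, hzW⟩
          exact ⟨hzA, hzW, fun h => hvA (h ▸ hzA)⟩
      obtain ⟨x, hx, y, hy, hxy⟩ := hc' A hA (by rwa [heq])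
      rw [heq] at hx hy
      have hxv : x ≠ v := fun h => hvA (h ▸ hx.1)
      have hyv : y ≠ v := fun h => hvA (h ▸ hy.1)
      refine ⟨x, hx, y, hy, ?_⟩
      rwa [Function.update_of_ne hxv, Function.update_of_ne hyv]

end Helpers

/-- Every ABAB-free hypergraph is proper 3-colorable: there is a coloring of the vertices
with 3 colors such that no hyperedge of size at least 2 is monochromatic. -/
theorem stmt0 {V : Type*} [Fintype V] (E : Set (Set V))
    (h : ∃ ord : LinearOrder V, ABABFree ord.lt E) :
    ∃ c : V → Fin 3, ∀ A ∈ E, 2 ≤ A.ncard →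
      ∃ x ∈ A, ∃ y ∈ A, c x ≠ c y := by
  obtain ⟨ord, hE⟩ := h
  letI := ord
  have hE' : ABABFree (· < ·) E := hE
  obtain ⟨c, hc⟩ := color' E hE' (Finset.univ : Finset V).card Finset.univ le_rfl
  refine ⟨c, fun A hA h2 => ?_⟩
  have hAu : A ∩ (↑(Finset.univ : Finset V) : Set V) = A := by simp
  obtain ⟨x, hx, y, hy, hxy⟩ := hc A hA (by rwa [hAu])
  rw [hAu] at hx hy
  exact ⟨x, hx, y, hy, hxy⟩
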